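/- Let S, A be finite nonempty sets, let f : ℝ^d × S × A → ℝ be differentiable in its first argument, fix θ₀ ∈ ℝ^d, and suppose the policy π satisfies π(a|s) = exp f(θ₀, s, a) for all (s,a). Define the AIRL discriminator D_θ(s,a) = exp f(θ,s,a) / ( exp f(θ,s,a) + π(a|s) ). Then at θ = θ₀: (i) ∇_θ log D_θ(s,a) = (1/2) ∇_θ f(θ₀,s,a) and (ii) ∇_θ log(1 − D_θ(s,a)) = −(1/2) ∇_θ f(θ₀,s,a) for every (s,a). Consequently, for any horizon T_h and any two probability distributions 𝔻 and P_π over sequences ((S_0,A_0),…,(S_{T_h−1},A_{T_h−1})) in (S × A)^{T_h}, the cross-entropy discriminator loss L(θ) = −E_{P_π}[ Σ_{t=0}^{T_h−1} log(1 − D_θ(S_t,A_t)) ] − E_{𝔻}[ Σ_{t=0}^{T_h−1} log D_θ(S_t,A_t) ] satisfies −2 ∇_θ L(θ₀) = E_{𝔻}[ Σ_{t=0}^{T_h−1} ∇_θ f(θ₀,S_t,A_t) ] − E_{P_π}[ Σ_{t=0}^{T_h−1} ∇_θ f(θ₀,S_t,A_t) ]. -/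

import Mathlib

open InnerProductSpace

section aux

variable {E : Type*} [NormedAddCommGroup E] [InnerProductSpace ℝ E] [CompleteSpace E]

/-- gradient of `θ ↦ log (exp (u θ) + exp (u θ₀))` at `θ₀` is `½ u'`. -/
lemma aux_logden {u : E → ℝ} (hu : Differentiable ℝ u) (θ₀ : E) :
    HasFDerivAt (fun θ => Real.log (Real.exp (u θ) + Real.exp (u θ₀)))
      ((1 / 2 : ℝ) • fderiv ℝ u θ₀) θ₀ := by
  have h1 : HasFDerivAt (fun θ => Real.exp (u θ) + Real.exp (u θ₀))
      (Real.exp (u θ₀) • fderiv ℝ u θ₀) θ₀ :=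
    ((hu θ₀).hasFDerivAt.exp).add_const _
  have hne : Real.exp (u θ₀) + Real.exp (u θ₀) ≠ 0 := by positivity
  have h2 := h1.log hne
  convert h2 using 1
  rw [smul_smul]
  congr 1
  have := Real.exp_pos (u θ₀)
  field_simp
  norm_num

lemma aux_logD {u : E → ℝ} (hu : Differentiable ℝ u) (θ₀ : E) :
    HasFDerivAt (fun θ => Real.log (Real.exp (u θ) / (Real.exp (u θ) + Real.exp (u θ₀))))
      ((1 / 2 : ℝ) • fderiv ℝ u θ₀) θ₀ := by
  have heq : (fun θ => Real.log (Real.exp (u θ) / (Real.exp (u θ) + Real.exp (u θ₀))))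
      = fun θ => u θ - Real.log (Real.exp (u θ) + Real.exp (u θ₀)) := by
    funext θ
    rw [Real.log_div (Real.exp_ne_zero _) (by positivity), Real.log_exp]
  rw [heq]
  have h := (hu θ₀).hasFDerivAt.fun_sub (aux_logden hu θ₀)
  refine h.congr_fderiv ?_
  module

lemma aux_log1mD {u : E → ℝ} (hu : Differentiable ℝ u) (θ₀ : E) :
    HasFDerivAt (fun θ => Real.log (1 - Real.exp (u θ) / (Real.exp (u θ) + Real.exp (u θ₀))))
      (-((1 / 2 : ℝ) • fderiv ℝ u θ₀)) θ₀ := by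
  have heq : (fun θ => Real.log (1 - Real.exp (u θ) / (Real.exp (u θ) + Real.exp (u θ₀))))
      = fun θ => u θ₀ - Real.log (Real.exp (u θ) + Real.exp (u θ₀)) := by
    funext θ
    have h1 : (1 : ℝ) - Real.exp (u θ) / (Real.exp (u θ) + Real.exp (u θ₀))
        = Real.exp (u θ₀) / (Real.exp (u θ) + Real.exp (u θ₀)) := by
      have : Real.exp (u θ) + Real.exp (u θ₀) ≠ 0 := by positivity
      field_simp
      ring
    rw [h1, Real.log_div (Real.exp_ne_zero _) (by positivity), Real.log_exp]
  rw [heq]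
  have h := (hasFDerivAt_const (u θ₀) θ₀).fun_sub (aux_logden hu θ₀)
  refine h.congr_fderiv ?_
  module

end aux

/-! STATEMENT 9: AIRL discriminator gradients. If the generator policy satisfies
`π(a|s) = exp f(θ₀,s,a)`, then at `θ = θ₀` we have
`∇_θ log D_θ(s,a) = ½ ∇_θ f(θ₀,s,a)` and `∇_θ log(1 − D_θ(s,a)) = −½ ∇_θ f(θ₀,s,a)`,
and consequently the cross-entropy discriminator loss `L` satisfies
`−2 ∇_θ L(θ₀) = E_𝔻[∑_t ∇_θ f(θ₀,S_t,A_t)] − E_{P_π}[∑_t ∇_θ f(θ₀,S_t,A_t)]`. -/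

set_option maxHeartbeats 1000000 in
theorem stmt9 {S A : Type*} [Fintype S] [Fintype A] [Nonempty S] [Nonempty A] {d : ℕ}
    (f : EuclideanSpace ℝ (Fin d) → S → A → ℝ)
    (hf : ∀ s a, Differentiable ℝ (fun θ => f θ s a))
    (θ₀ : EuclideanSpace ℝ (Fin d))
    -- the generator policy equals `exp f(θ₀, ·, ·)`
    (π : S → A → ℝ) (hπ : ∀ s a, π s a = Real.exp (f θ₀ s a))
    -- the AIRL discriminator
    (D : EuclideanSpace ℝ (Fin d) → S → A → ℝ)
    (hD : ∀ θ s a, D θ s a = Real.exp (f θ s a) / (Real.exp (f θ s a) + π s a))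
    -- horizon and two distributions over length-`Th` sequences of state-action pairs:
    -- `Dd` (demonstrator) and `Pp` (generator)
    (Th : ℕ)
    (Dd Pp : (Fin Th → S × A) → ℝ)
    (hDd0 : ∀ τ, 0 ≤ Dd τ) (hDd1 : ∑ τ, Dd τ = 1)
    (hPp0 : ∀ τ, 0 ≤ Pp τ) (hPp1 : ∑ τ, Pp τ = 1) :
    -- (i)
    (∀ s a, HasGradientAt (fun θ => Real.log (D θ s a))
        ((1 / 2 : ℝ) • gradient (fun θ => f θ s a) θ₀) θ₀) ∧
    -- (ii)
    (∀ s a, HasGradientAt (fun θ => Real.log (1 - D θ s a))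
        (-((1 / 2 : ℝ) • gradient (fun θ => f θ s a) θ₀)) θ₀) ∧
    -- consequently, the discriminator loss `L` has gradient at `θ₀` equal to
    -- `−½ (E_𝔻[∑_t ∇f] − E_{P_π}[∑_t ∇f])`, i.e. `−2∇L(θ₀) = E_𝔻[∑_t ∇f] − E_{P_π}[∑_t ∇f]`
    HasGradientAt
      (fun θ =>
        -(∑ τ : Fin Th → S × A, Pp τ * ∑ t, Real.log (1 - D θ (τ t).1 (τ t).2))
          - ∑ τ : Fin Th → S × A, Dd τ * ∑ t, Real.log (D θ (τ t).1 (τ t).2))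
      ((-(1 / 2) : ℝ) •
        ((∑ τ : Fin Th → S × A, Dd τ • ∑ t, gradient (fun θ => f θ (τ t).1 (τ t).2) θ₀)
          - ∑ τ : Fin Th → S × A, Pp τ • ∑ t, gradient (fun θ => f θ (τ t).1 (τ t).2) θ₀))
      θ₀ := by
  let 𝔽 : S → A → (EuclideanSpace ℝ (Fin d) →L[ℝ] ℝ) :=
    fun s a => fderiv ℝ (fun θ => f θ s a) θ₀
  have hgrad : ∀ s a, (InnerProductSpace.toDual ℝ (EuclideanSpace ℝ (Fin d)))
      (gradient (fun θ => f θ s a) θ₀) = 𝔽 s a :=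
    fun s a => (InnerProductSpace.toDual ℝ (EuclideanSpace ℝ (Fin d))).apply_symm_apply _
  refine ⟨?_, ?_, ?_⟩
  · intro s a
    rw [hasGradientAt_iff_hasFDerivAt, map_smul, hgrad s a]
    have : (fun θ => Real.log (D θ s a))
        = fun θ => Real.log (Real.exp (f θ s a) / (Real.exp (f θ s a) + Real.exp (f θ₀ s a))) := by
      funext θ; rw [hD, hπ]
    rw [this]
    exact aux_logD (hf s a) θ₀
  · intro s a
    rw [hasGradientAt_iff_hasFDerivAt, map_neg, map_smul, hgrad s a]
    have : (fun θ => Real.log (1 - D θ s a))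
        = fun θ => Real.log (1 - Real.exp (f θ s a) / (Real.exp (f θ s a) + Real.exp (f θ₀ s a))) := by
      funext θ; rw [hD, hπ]
    rw [this]
    exact aux_log1mD (hf s a) θ₀
  · rw [hasGradientAt_iff_hasFDerivAt]
    simp only [hD, hπ]
    have h1 : ∀ τ : Fin Th → S × A,
        HasFDerivAt (fun θ => Pp τ * ∑ t, Real.log (1 - Real.exp (f θ (τ t).1 (τ t).2) /
            (Real.exp (f θ (τ t).1 (τ t).2) + Real.exp (f θ₀ (τ t).1 (τ t).2))))
          (Pp τ • ∑ t : Fin Th, -((1 / 2 : ℝ) • 𝔽 (τ t).1 (τ t).2)) θ₀ := by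
      intro τ
      exact (HasFDerivAt.fun_sum (fun t _ => aux_log1mD (hf _ _) θ₀)).const_mul (Pp τ)
    have h2 : ∀ τ : Fin Th → S × A,
        HasFDerivAt (fun θ => Dd τ * ∑ t, Real.log (Real.exp (f θ (τ t).1 (τ t).2) /
            (Real.exp (f θ (τ t).1 (τ t).2) + Real.exp (f θ₀ (τ t).1 (τ t).2))))
          (Dd τ • ∑ t : Fin Th, ((1 / 2 : ℝ) • 𝔽 (τ t).1 (τ t).2)) θ₀ := by
      intro τ
      exact (HasFDerivAt.fun_sum (fun t _ => aux_logD (hf _ _) θ₀)).const_mul (Dd τ)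
    have hbig := ((HasFDerivAt.fun_sum (fun τ (_ : τ ∈ Finset.univ) => h1 τ)).fun_neg).fun_sub
      (HasFDerivAt.fun_sum (fun τ (_ : τ ∈ Finset.univ) => h2 τ))
    have e1 : ∀ τ : Fin Th → S × A,
        Pp τ • ∑ t : Fin Th, -((1 / 2 : ℝ) • 𝔽 (τ t).1 (τ t).2)
          = -((1 / 2 : ℝ) • (Pp τ • ∑ t : Fin Th, 𝔽 (τ t).1 (τ t).2)) := by
      intro τ
      rw [Finset.sum_neg_distrib, ← Finset.smul_sum]
      module
    have e2 : ∀ τ : Fin Th → S × A,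
        Dd τ • ∑ t : Fin Th, ((1 / 2 : ℝ) • 𝔽 (τ t).1 (τ t).2)
          = (1 / 2 : ℝ) • (Dd τ • ∑ t : Fin Th, 𝔽 (τ t).1 (τ t).2) := by
      intro τ
      simp only [← Finset.smul_sum]
      module
    have hEq : (InnerProductSpace.toDual ℝ (EuclideanSpace ℝ (Fin d)))
        ((-(1 / 2) : ℝ) •
          ((∑ τ : Fin Th → S × A, Dd τ • ∑ t, gradient (fun θ => f θ (τ t).1 (τ t).2) θ₀)
            - ∑ τ : Fin Th → S × A, Pp τ • ∑ t, gradient (fun θ => f θ (τ t).1 (τ t).2) θ₀))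
        = (-(∑ τ : Fin Th → S × A, Pp τ • ∑ t : Fin Th, -((1 / 2 : ℝ) • 𝔽 (τ t).1 (τ t).2))
            - ∑ τ : Fin Th → S × A, Dd τ • ∑ t : Fin Th, ((1 / 2 : ℝ) • 𝔽 (τ t).1 (τ t).2)) := by
      simp only [map_smul, map_sub, map_sum, hgrad, e1, e2, Finset.sum_neg_distrib,
        ← Finset.smul_sum]
      have e1' : ∀ τ : Fin Th → S × A,
          Pp τ • -((1 / 2 : ℝ) • ∑ t : Fin Th, 𝔽 (τ t).1 (τ t).2)
            = (-(1 / 2) : ℝ) • (Pp τ • ∑ t : Fin Th, 𝔽 (τ t).1 (τ t).2) := fun τ => by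
        module
      have e2' : ∀ τ : Fin Th → S × A,
          Dd τ • ((1 / 2 : ℝ) • ∑ t : Fin Th, 𝔽 (τ t).1 (τ t).2)
            = ((1 / 2) : ℝ) • (Dd τ • ∑ t : Fin Th, 𝔽 (τ t).1 (τ t).2) := fun τ => by
        module
      simp only [e1', e2', ← Finset.smul_sum]
      module
    rw [hEq]
    exact hbig
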